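/- For k ≥ 2, every root r of the Fibonacci polynomial x^k − x^{k−1} − ⋯ − x − 1 satisfies |r| > 3^{−1/k}. -/

import Mathlib

open Polynomial

theorem roots_gt_third_root (k : ℕ) (hk : 2 ≤ k) (r : ℂ)
    (hr : ((X : ℂ[X]) ^ k - ∑ i ∈ Finset.range k, X ^ i).eval r = 0) :
    (3 : ℝ) ^ (-(1 : ℝ) / k) < ‖r‖ := by
  simp only [eval_sub, eval_pow, eval_X, eval_finset_sum] at hr
  have key : r ^ k * (2 - r) = 1 := by
    linear_combination (1 - r) * hr - geom_sum_mul r k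
  set a := ‖r‖ with ha
  by_contra h
  push_neg at h
  have hk0 : (k : ℝ) ≠ 0 := by
    have : 0 < k := by omega
    exact_mod_cast this.ne'
  have habs : a ^ k * ‖2 - r‖ = 1 := by
    rw [← norm_pow, ← norm_mul, key, norm_one]
  have h2r : ‖2 - r‖ ≤ 2 + a := by
    calc ‖2 - r‖ ≤ ‖(2:ℂ)‖ + ‖r‖ :=
          norm_sub_le 2 r
      _ = 2 + a := by simp [ha]
  have hpow : a ^ k ≤ 1 / 3 := by
    calc a ^ k ≤ ((3:ℝ) ^ (-(1:ℝ)/k)) ^ k :=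
          pow_le_pow_left₀ (norm_nonneg r) h k
      _ = 1 / 3 := by
        rw [← Real.rpow_natCast ((3:ℝ) ^ (-(1:ℝ)/k)) k,
          ← Real.rpow_mul (by norm_num), div_mul_cancel₀ _ hk0]
        norm_num
  have ha1 : a < 1 := by
    have : (3:ℝ) ^ (-(1:ℝ)/k) < 1 := by
      apply Real.rpow_lt_one_of_one_lt_of_neg (by norm_num)
      have hkp : (0:ℝ) < k := by exact_mod_cast (by omega : 0 < k)
      exact div_neg_of_neg_of_pos (by norm_num) hkp
    linarith
  have hnn : 0 ≤ a ^ k := pow_nonneg (norm_nonneg r) k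
  nlinarith [mul_le_mul_of_nonneg_left h2r hnn, norm_nonneg r]
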